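/- Let K be an algebraically closed field, k₁, k₂ positive integers, A = diag(λ,0) with λ ≠ 0, and B = diag(ξ,0) with ξ arbitrary. Then every matrix of the form [[a,b],[0,0]] lies in the image of the map (X,Y) ↦ AX^{k₁} + BY^{k₂} on M(2,K). -/

import Mathlib

lemma aux_pow1 {K : Type*} [Field K] (x y : K) :
    ∀ n : ℕ, (!![x, y; 0, 0] : Matrix (Fin 2) (Fin 2) K) ^ (n + 1)
      = !![x ^ (n + 1), x ^ n * y; 0, 0] := by
  intro n
  induction n with
  | zero => simp
  | succ n ih =>
    rw [pow_succ, ih, Matrix.mul_fin_two]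
    ring_nf

lemma aux_pow2 {K : Type*} [Field K] (c : K) :
    ∀ n : ℕ, (!![0, c; 0, 1] : Matrix (Fin 2) (Fin 2) K) ^ (n + 1)
      = !![0, c; 0, 1] := by
  intro n
  induction n with
  | zero => simp
  | succ n ih =>
    rw [pow_succ, ih, Matrix.mul_fin_two]
    ring_nf

theorem stmt7 (K : Type*) [Field K] [IsAlgClosed K] (k₁ k₂ : ℕ)
    (hk₁ : 0 < k₁) (hk₂ : 0 < k₂) (l ξ : K) (hl : l ≠ 0) :
    ∀ a b : K, ∃ X Y : Matrix (Fin 2) (Fin 2) K,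
      !![a, b; 0, 0] = !![l, 0; 0, 0] * X ^ k₁ + !![ξ, 0; 0, 0] * Y ^ k₂ := by
  intro a b
  obtain ⟨m, hm⟩ := Nat.exists_eq_add_of_lt hk₁
  have hk : k₁ = m + 1 := by omega
  by_cases ha : a = 0
  · refine ⟨!![0, b / l; 0, 1], 0, ?_⟩
    rw [hk, aux_pow2, zero_pow (by omega : k₂ ≠ 0), Matrix.mul_zero, add_zero,
      Matrix.mul_fin_two]
    field_simp [ha]
    simp [ha]
  · obtain ⟨x, hx⟩ := IsAlgClosed.exists_pow_nat_eq (a / l) hk₁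
    have hx0 : x ≠ 0 := by
      intro h
      rw [h, hk, zero_pow (by omega)] at hx
      exact ha (by rw [eq_comm, div_eq_zero_iff] at hx; exact hx.resolve_right hl)
    refine ⟨!![x, b / (l * x ^ m); 0, 0], 0, ?_⟩
    rw [hk, aux_pow1, zero_pow (by omega : k₂ ≠ 0), Matrix.mul_zero, add_zero,
      Matrix.mul_fin_two]
    have h1 : l * x ^ (m + 1) = a := by rw [← hk, hx]; field_simp
    have h2 : l * (x ^ m * (b / (l * x ^ m))) = b := by
      field_simp
    rw [h1]
    simp [h2]
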